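/- Let 𝕋 := ℝ/ℤ with its Haar probability measure, and let α, ν ∈ 𝕋. Let γ : 𝕋 → ℂ be continuous, and let f, f̃, h be families of maps f_θ, f̃_θ, h_θ : ℂ → ℂ indexed by θ ∈ 𝕋 such that: (i) f_θ(γ(θ)) = γ(θ+α) for all θ; (ii) for each θ, f_θ is complex-differentiable at γ(θ) with f_θ'(γ(θ)) ≠ 0, h_θ is complex-differentiable at γ(θ) with h_θ'(γ(θ)) ≠ 0, and f̃_{θ+ν} is complex-differentiable at h_θ(γ(θ)); (iii) the conjugacy relation f̃_{θ+ν} ∘ h_θ = h_{θ+α} ∘ f_θ holds on some neighborhood of γ(θ), for each θ; (iv) the functions θ ↦ f_θ'(γ(θ)) and θ ↦ h_θ'(γ(θ)) are continuous on 𝕋. Define γ̃(φ) := h_{φ−ν}(γ(φ−ν)). Then ∫_𝕋 log |f̃_φ'(γ̃(φ))| dφ = ∫_𝕋 log |f_θ'(γ(θ))| dθ, where log denotes the real logarithm and the integrals are with respect to the Haar probability measure on 𝕋. -/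

import Mathlib

open MeasureTheory

/-- Part 2 of the Lemma on invariance of the fibered multiplier: the Lyapunov exponent
of an invariant curve is preserved under fibered conformal conjugacy up to angle
translation `ν`. -/
theorem lyapunov_exponent_invariance
    (α ν : UnitAddCircle) (γ : UnitAddCircle → ℂ) (hγ : Continuous γ)
    (f ftil h : UnitAddCircle → ℂ → ℂ)
    (f' h' F' : UnitAddCircle → ℂ)
    (hinv : ∀ θ, f θ (γ θ) = γ (θ + α))
    (hdf : ∀ θ, HasDerivAt (f θ) (f' θ) (γ θ))
    (hf0 : ∀ θ, f' θ ≠ 0)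
    (hdh : ∀ θ, HasDerivAt (h θ) (h' θ) (γ θ))
    (hh0 : ∀ θ, h' θ ≠ 0)
    (hdF : ∀ θ, HasDerivAt (ftil (θ + ν)) (F' (θ + ν)) (h θ (γ θ)))
    (hconj : ∀ θ, ∀ᶠ z in nhds (γ θ), ftil (θ + ν) (h θ z) = h (θ + α) (f θ z))
    (hcf : Continuous f') (hch : Continuous h') :
    ∫ φ : UnitAddCircle, Real.log (‖F' φ‖)
      = ∫ θ : UnitAddCircle, Real.log (‖f' θ‖) := by
  -- Chain rule identity: F'(θ+ν) * h'(θ) = h'(θ+α) * f'(θ)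
  have key : ∀ θ, F' (θ + ν) * h' θ = h' (θ + α) * f' θ := by
    intro θ
    have A : HasDerivAt (fun z => ftil (θ + ν) (h θ z)) (F' (θ + ν) * h' θ) (γ θ) :=
      (hdF θ).comp (γ θ) (hdh θ)
    have hd2 : HasDerivAt (h (θ + α)) (h' (θ + α)) (f θ (γ θ)) := by
      rw [hinv θ]; exact hdh (θ + α)
    have B : HasDerivAt (fun z => h (θ + α) (f θ z)) (h' (θ + α) * f' θ) (γ θ) :=
      hd2.comp (γ θ) (hdf θ)
    have A' : HasDerivAt (fun z => h (θ + α) (f θ z)) (F' (θ + ν) * h' θ) (γ θ) :=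
      A.congr_of_eventuallyEq ((hconj θ).mono fun z hz => hz.symm)
    exact A'.unique B
  have hF : ∀ θ, F' (θ + ν) = h' (θ + α) * f' θ / h' θ := fun θ => by
    rw [eq_div_iff (hh0 θ), key θ]
  -- pointwise log identity
  have hlog : ∀ θ, Real.log (‖F' (θ + ν)‖)
      = Real.log (‖f' θ‖) + Real.log (‖h' (θ + α)‖)
        - Real.log (‖h' θ‖) := by
    intro θ
    rw [hF θ, norm_div, norm_mul, Real.log_div (mul_ne_zero (by simpa using hh0 (θ + α)) (by simpa using hf0 θ))
      (by simpa using hh0 θ), Real.log_mul (by simpa using hh0 (θ + α))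
      (by simpa using hf0 θ)]
    ring
  have contlog : ∀ (g : UnitAddCircle → ℂ), Continuous g → (∀ θ, g θ ≠ 0) →
      Continuous fun θ => Real.log (‖g θ‖) := by
    intro g hg hg0
    rw [continuous_iff_continuousAt]
    intro θ
    exact (Real.continuousAt_log (by simpa using hg0 θ)).comp
      (continuous_norm.continuousAt.comp hg.continuousAt)
  have cF : Continuous fun θ => Real.log (‖f' θ‖) := contlog _ hcf hf0
  have cH : Continuous fun θ => Real.log (‖h' θ‖) := contlog _ hch hh0
  have cHα : Continuous fun θ => Real.log (‖h' (θ + α)‖) :=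
    cH.comp (continuous_id.add continuous_const)
  have iF : Integrable fun θ => Real.log (‖f' θ‖) :=
    cF.integrable_of_hasCompactSupport (HasCompactSupport.of_compactSpace _)
  have iH : Integrable fun θ => Real.log (‖h' θ‖) :=
    cH.integrable_of_hasCompactSupport (HasCompactSupport.of_compactSpace _)
  have iHα : Integrable fun θ => Real.log (‖h' (θ + α)‖) :=
    cHα.integrable_of_hasCompactSupport (HasCompactSupport.of_compactSpace _)
  calc ∫ φ : UnitAddCircle, Real.log (‖F' φ‖)
      = ∫ θ : UnitAddCircle, Real.log (‖F' (θ + ν)‖) :=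
        (integral_add_right_eq_self (fun φ => Real.log (‖F' φ‖)) ν).symm
    _ = ∫ θ : UnitAddCircle, (Real.log (‖f' θ‖)
          + Real.log (‖h' (θ + α)‖) - Real.log (‖h' θ‖)) := by
        exact integral_congr_ae (Filter.Eventually.of_forall hlog)
    _ = ∫ θ : UnitAddCircle, Real.log (‖f' θ‖) := by
        have hadd : Integrable (fun θ => Real.log (‖f' θ‖)
            + Real.log (‖h' (θ + α)‖)) := iF.add iHα
        rw [integral_sub hadd iH, integral_add iF iHα,
          integral_add_right_eq_self (fun θ => Real.log (‖h' θ‖)) α]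
        ring
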